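/- Let g be a right Leibniz algebra over a field k, V a k-vector space, and π : g → End(V) a k-linear map satisfying π([a,b]) = π(a)π(b) − π(b)π(a) for all a,b ∈ g. Let M₀ = V ⊕ (g ⊗ V) and for x ∈ g define ρ₀(x), ρ₁(x) ∈ End(M₀) by ρ₀(x)(v) = π(x)v, ρ₀(x)(a⊗v) = a⊗π(x)v − [a,x]⊗v, ρ₁(x)(v) = x⊗v, ρ₁(x)(a⊗v) = 0 (v ∈ V, a ∈ g). Then for all a,b ∈ g: ρ₀([a,b]) = ρ₀(a)ρ₀(b) − ρ₀(b)ρ₀(a), ρ₁([a,b]) = ρ₁(a)ρ₀(b) − ρ₀(b)ρ₁(a), and ρ₁(a)ρ₁(b) = 0. -/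

import Mathlib

open scoped TensorProduct

/-- For a right Leibniz algebra `g`, a `k`-linear
representation `π : g → End(V)`, and the maps `ρ₀, ρ₁` on
`M₀ = V ⊕ (g ⊗ V)` defined by `ρ₀(x)(v) = π(x)v`,
`ρ₀(x)(a⊗v) = a⊗π(x)v - [a,x]⊗v`, `ρ₁(x)(v) = x⊗v`, `ρ₁(x)(a⊗v) = 0`,
one has `ρ₀([a,b]) = [ρ₀(a), ρ₀(b)]`, `ρ₁([a,b]) = ρ₁(a)ρ₀(b) - ρ₀(b)ρ₁(a)`
and `ρ₁(a)ρ₁(b) = 0`. -/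
theorem leibniz_conformal_rep_relations
    {k : Type*} [Field k] {g : Type*} [AddCommGroup g] [Module k g]
    {V : Type*} [AddCommGroup V] [Module k V]
    (br : g →ₗ[k] g →ₗ[k] g)
    (hLeib : ∀ x y z : g, br (br x y) z = br (br x z) y + br x (br y z))
    (π : g →ₗ[k] Module.End k V)
    (hπ : ∀ a b : g, π (br a b) = π a * π b - π b * π a)
    (ρ₀ ρ₁ : g → Module.End k (V × (g ⊗[k] V)))
    (hρ₀v : ∀ (x : g) (v : V), ρ₀ x (v, 0) = (π x v, 0))
    (hρ₀t : ∀ (x a : g) (v : V),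
      ρ₀ x (0, a ⊗ₜ[k] v) = (0, a ⊗ₜ[k] (π x v) - (br a x) ⊗ₜ[k] v))
    (hρ₁v : ∀ (x : g) (v : V), ρ₁ x (v, 0) = (0, x ⊗ₜ[k] v))
    (hρ₁t : ∀ (x a : g) (v : V), ρ₁ x (0, a ⊗ₜ[k] v) = 0) :
    ∀ a b : g,
      ρ₀ (br a b) = ρ₀ a * ρ₀ b - ρ₀ b * ρ₀ a ∧
      ρ₁ (br a b) = ρ₁ a * ρ₀ b - ρ₀ b * ρ₁ a ∧
      ρ₁ a * ρ₁ b = 0 := by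
  intro a b
  -- extensionality principle
  have hext : ∀ f h : Module.End k (V × (g ⊗[k] V)),
      (∀ v : V, f (v, 0) = h (v, 0)) →
      (∀ (c : g) (v : V), f (0, c ⊗ₜ[k] v) = h (0, c ⊗ₜ[k] v)) → f = h := by
    intro f h h1 h2
    have hz : ∀ t : g ⊗[k] V, f (0, t) = h (0, t) := by
      intro t
      induction t using TensorProduct.induction_on with
      | zero => rw [Prod.mk_zero_zero, map_zero, map_zero]
      | tmul c w => exact h2 c w
      | add x y hx hy =>
          have hxy : ((0, x + y) : V × (g ⊗[k] V)) = (0, x) + (0, y) := by simp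
          rw [hxy, map_add, map_add, hx, hy]
    apply LinearMap.ext
    intro p
    obtain ⟨v, t⟩ := p
    have hv : ((v, t) : V × (g ⊗[k] V)) = (v, 0) + (0, t) := by simp
    rw [hv, map_add, map_add, h1, hz]
  have hsub : ∀ (f : Module.End k (V × (g ⊗[k] V))) (p q : g ⊗[k] V),
      f (0, p - q) = f (0, p) - f (0, q) := by
    intro f p q
    rw [show ((0, p - q) : V × (g ⊗[k] V)) = (0, p) - (0, q) by simp, map_sub]
  refine ⟨?_, ?_, ?_⟩
  · apply hext
    · intro v
      simp [LinearMap.sub_apply, Module.End.mul_apply, hρ₀v, hπ]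
    · intro c v
      have key : br c (br a b) = br (br c a) b - br (br c b) a := by
        rw [hLeib c a b]; abel
      simp only [LinearMap.sub_apply, Module.End.mul_apply, hρ₀t, hsub, hρ₀v, hπ, key,
        TensorProduct.tmul_sub, TensorProduct.sub_tmul]
      ext <;> simp <;> abel
  · apply hext
    · intro v
      simp only [LinearMap.sub_apply, Module.End.mul_apply, hρ₁v, hρ₀v, hρ₀t]
      ext <;> simp <;> abel
    · intro c v
      simp only [LinearMap.sub_apply, Module.End.mul_apply, hρ₁t, hρ₀t, hsub, map_zero]
      simp
  · apply hext (ρ₁ a * ρ₁ b) 0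
    · intro v
      simp [Module.End.mul_apply, hρ₁v, hρ₁t]
    · intro c v
      simp [Module.End.mul_apply, hρ₁t]
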